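/- For positive integers a and b with gcd(a,b)=1, the sum of all nonnegative integers not representable as ax+by with x,y nonnegative integers equals (a-1)(b-1)(2ab-a-b-1)/12. -/

import Mathlib

set_option maxRecDepth 8000

private lemma sumId (m : ℕ) : (∑ j ∈ Finset.Icc 1 m, (j:ℚ)) = m*(m+1)/2 := by
  induction m with
  | zero => simp
  | succ n ih =>
    rw [Finset.sum_Icc_succ_top (by omega), ih]
    push_cast; ring

private lemma sumSq (m : ℕ) : (∑ j ∈ Finset.Icc 1 m, (j:ℚ)^2) = m*(m+1)*(2*m+1)/6 := by
  induction m with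
  | zero => simp
  | succ n ih =>
    rw [Finset.sum_Icc_succ_top (by omega), ih]
    push_cast; ring

private lemma ioo_eq (a : ℕ) (ha : 0 < a) : Finset.Ioo 0 a = Finset.Icc 1 (a-1) := by
  ext t; simp only [Finset.mem_Ioo, Finset.mem_Icc]; omega

private lemma inj_t (a b : ℕ) (hab : Nat.gcd a b = 1) {t t' : ℕ} (hta : t < a) (hta' : t' < a)
    (h : b*t ≡ b*t' [MOD a]) : t = t' := by
  have h2 : t ≡ t' [MOD a] := Nat.ModEq.cancel_left_of_coprime hab h
  have h3 : t % a = t' % a := h2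
  rwa [Nat.mod_eq_of_lt hta, Nat.mod_eq_of_lt hta'] at h3

private lemma not_dvd (a b : ℕ) (hab : Nat.gcd a b = 1) {t : ℕ} (ht0 : 0 < t) (hta : t < a) :
    ¬ a ∣ b * t := by
  intro h
  have : a ∣ t := (Nat.Coprime.dvd_of_dvd_mul_left hab h)
  have := Nat.le_of_dvd ht0 this
  omega

private lemma img (a b : ℕ) (ha : 0 < a) (hab : Nat.gcd a b = 1) :
    (Finset.Ioo 0 a).image (fun t => b*t % a) = Finset.Ioo 0 a := by
  apply Finset.eq_of_subset_of_card_le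
  · intro r hr
    simp only [Finset.mem_image, Finset.mem_Ioo] at hr ⊢
    obtain ⟨t, ⟨ht0, hta⟩, rfl⟩ := hr
    refine ⟨?_, Nat.mod_lt _ ha⟩
    rcases Nat.eq_zero_or_pos (b*t % a) with h | h
    · exact absurd (Nat.dvd_of_mod_eq_zero h) (not_dvd a b hab ht0 hta)
    · exact h
  · rw [Finset.card_image_of_injOn]
    intro t ht t' ht' h
    simp only [Finset.mem_coe, Finset.mem_Ioo] at ht ht'
    exact inj_t a b hab ht.2 ht'.2 h

private lemma nonrep_iff (a b : ℕ) (ha : 0 < a) (hab : Nat.gcd a b = 1) (n : ℕ) :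
    (¬ ∃ x y : ℕ, n = a * x + b * y) ↔
      ∃ t j : ℕ, (0 < t ∧ t < a) ∧ (0 < j ∧ j < b) ∧ a*j < b*t ∧ n = b*t - a*j := by
  haveI : NeZero a := ⟨ha.ne'⟩
  constructor
  · intro hn
    set u : ZMod a := (b : ZMod a)⁻¹ * n with hu
    set t : ℕ := u.val with htdef
    have hbu : IsUnit (b : ZMod a) := (ZMod.isUnit_iff_coprime b a).mpr (Nat.coprime_comm.mp hab)
    have hcast : ((b*t : ℕ) : ZMod a) = (n : ZMod a) := by
      push_cast
      rw [htdef, ZMod.natCast_val, ZMod.cast_id, hu, ← mul_assoc, ZMod.mul_inv_of_unit _ hbu,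
        one_mul]
    have hmod : b*t ≡ n [MOD a] := (ZMod.natCast_eq_natCast_iff _ _ _).mp hcast
    have hta : t < a := ZMod.val_lt u
    by_cases hge : b*t ≤ n
    · exfalso
      obtain ⟨x, hx⟩ := (Nat.modEq_iff_dvd' hge).mp hmod
      exact hn ⟨x, t, by omega⟩
    · push_neg at hge
      obtain ⟨j, hj⟩ := (Nat.modEq_iff_dvd' (le_of_lt hge)).mp hmod.symm
      have ht0 : 0 < t := by
        rcases Nat.eq_zero_or_pos t with h | h
        · exfalso; rw [h, Nat.mul_zero] at hge; omega
        · exact h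
      have hj0 : 0 < j := by
        rcases Nat.eq_zero_or_pos j with h | h
        · exfalso; rw [h, Nat.mul_zero] at hj; omega
        · exact h
      have hlt : a * j < b * t := by
        rcases Nat.lt_or_ge (a*j) (b*t) with h | h
        · exact h
        · exfalso
          have heq : a * j = b * t := by omega
          exact not_dvd a b hab ht0 hta ⟨j, heq.symm⟩
      have hjb : j < b := by
        have h1 : b * t ≤ b * a := Nat.mul_le_mul_left b (le_of_lt hta)
        have h2 : a * j < a * b := by
          calc a * j < b * t := hlt
            _ ≤ b * a := h1
            _ = a * b := Nat.mul_comm b a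
        exact Nat.lt_of_mul_lt_mul_left h2
      exact ⟨t, j, ⟨ht0, hta⟩, ⟨hj0, hjb⟩, hlt, by omega⟩
  · rintro ⟨t, j, ⟨ht0, hta⟩, ⟨hj0, hjb⟩, hlt, rfl⟩ ⟨x, y, hxy⟩
    have hbt : b * t = b * y + (a*x + a*j) := by
      have h1 : a * (x + j) = a*x + a*j := by ring
      omega
    have hty : y < t := by
      by_contra hc
      push_neg at hc
      have : b * t ≤ b * y := Nat.mul_le_mul_left b hc
      have haj : 0 < a * j := Nat.mul_pos (by omega) hj0
      omega
    have hsub : b * (t - y) = a * (x + j) := by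
      rw [Nat.mul_sub]
      have h1 : a * (x + j) = a*x + a*j := by ring
      omega
    have hdvd : a ∣ (t - y) := Nat.Coprime.dvd_of_dvd_mul_left hab ⟨x + j, hsub⟩
    have h1 : 0 < t - y := by omega
    have := Nat.le_of_dvd h1 hdvd
    omega

/-- The sum of the nonrepresentable numbers is `(a-1)(b-1)(2ab-a-b-1)/12`. -/
theorem nonrepresentable_sum (a b : ℕ) (ha : 0 < a) (hb : 0 < b)
    (hab : Nat.gcd a b = 1)
    (hfin : {n : ℕ | ¬ ∃ x y : ℕ, n = a * x + b * y}.Finite) :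
    (∑ n ∈ hfin.toFinset, (n : ℚ))
      = ((a : ℚ) - 1) * ((b : ℚ) - 1) * (2 * a * b - a - b - 1) / 12 := by
  classical
  have haQ : (a:ℚ) ≠ 0 := Nat.cast_ne_zero.mpr ha.ne'
  -- Step 1: identify the nonrepresentable set
  have hD : hfin.toFinset =
      ((Finset.Ioo 0 a ×ˢ Finset.Ioo 0 b).filter (fun p => a * p.2 < b * p.1)).image
        (fun p => b * p.1 - a * p.2) := by
    ext n
    rw [Set.Finite.mem_toFinset]
    simp only [Set.mem_setOf_eq, Finset.mem_image, Finset.mem_filter, Finset.mem_product,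
      Finset.mem_Ioo]
    rw [nonrep_iff a b ha hab n]
    constructor
    · rintro ⟨t, j, h1, h2, h3, h4⟩
      exact ⟨(t, j), ⟨⟨h1, h2⟩, h3⟩, h4.symm⟩
    · rintro ⟨⟨t, j⟩, ⟨⟨h1, h2⟩, h3⟩, rfl⟩
      exact ⟨t, j, h1, h2, h3, rfl⟩
  have hinj : ∀ p ∈ (Finset.Ioo 0 a ×ˢ Finset.Ioo 0 b).filter (fun p => a * p.2 < b * p.1),
      ∀ p' ∈ (Finset.Ioo 0 a ×ˢ Finset.Ioo 0 b).filter (fun p => a * p.2 < b * p.1),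
      b * p.1 - a * p.2 = b * p'.1 - a * p'.2 → p = p' := by
    rintro ⟨t, j⟩ hp ⟨t', j'⟩ hp' h
    simp only [Finset.mem_filter, Finset.mem_product, Finset.mem_Ioo] at hp hp'
    obtain ⟨⟨⟨ht0, hta⟩, hj0, hjb⟩, hlt⟩ := hp
    obtain ⟨⟨⟨ht0', hta'⟩, hj0', hjb'⟩, hlt'⟩ := hp'
    have hh : b * t - a * j = b * t' - a * j' := h
    have hlt2 : a * j < b * t := hlt
    have hlt2' : a * j' < b * t' := hlt'
    have heq : b*t + a*j' = b*t' + a*j := by omega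
    have hm : b*t ≡ b*t' [MOD a] := by
      have h2 : (b*t + a*j') % a = (b*t' + a*j) % a := by rw [heq]
      rwa [Nat.add_mul_mod_self_left, Nat.add_mul_mod_self_left] at h2
    have htt : t = t' := inj_t a b hab hta hta' hm
    subst htt
    have : a * j = a * j' := by omega
    have : j = j' := Nat.eq_of_mul_eq_mul_left ha this
    simp [this]
  rw [hD, Finset.sum_image hinj, Finset.sum_filter, Finset.sum_product]
  -- Step 2: evaluate the inner sum for each t
  have hstep : ∀ t ∈ Finset.Ioo 0 a,
      (∑ j ∈ Finset.Ioo 0 b, if a * j < b * t then ((b * t - a * j : ℕ) : ℚ) else 0)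
        = ((b*t : ℕ):ℚ)^2/(2*a) - ((b*t:ℕ):ℚ)/2
          - ((b*t % a : ℕ):ℚ)^2/(2*a) + ((b*t % a : ℕ):ℚ)/2 := by
    intro t ht
    simp only [Finset.mem_Ioo] at ht
    obtain ⟨ht0, hta⟩ := ht
    set q := b*t / a with hqdef
    have hfilt : (Finset.Ioo 0 b).filter (fun j => a*j < b*t) = Finset.Icc 1 q := by
      ext j
      simp only [Finset.mem_filter, Finset.mem_Ioo, Finset.mem_Icc]
      constructor
      · rintro ⟨⟨hj0, hjb⟩, hlt⟩
        refine ⟨hj0, ?_⟩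
        rw [hqdef, Nat.le_div_iff_mul_le ha, Nat.mul_comm]
        omega
      · rintro ⟨hj1, hjq⟩
        have hle : a * j ≤ b * t := by
          have h5 := (Nat.le_div_iff_mul_le ha).mp (hqdef ▸ hjq)
          rw [Nat.mul_comm] at h5
          exact h5
        have hne : a * j ≠ b * t := fun h => not_dvd a b hab ht0 hta ⟨j, h.symm⟩
        have hqb : q < b := by
          rw [hqdef, Nat.div_lt_iff_lt_mul ha]
          exact (mul_lt_mul_iff_right₀ hb).mpr hta
        exact ⟨⟨by omega, by omega⟩, by omega⟩
    rw [← Finset.sum_filter, hfilt]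
    have hcast : ∀ j ∈ Finset.Icc 1 q, ((b * t - a * j : ℕ) : ℚ) = ((b*t:ℕ):ℚ) - (a:ℚ)*(j:ℚ) := by
      intro j hj
      simp only [Finset.mem_Icc] at hj
      have hle : a * j ≤ b * t := by
        have h5 := (Nat.le_div_iff_mul_le ha).mp (hqdef ▸ hj.2)
        rw [Nat.mul_comm] at h5
        exact h5
      push_cast [Nat.cast_sub hle]
      ring
    rw [Finset.sum_congr rfl hcast, Finset.sum_sub_distrib, Finset.sum_const, ← Finset.mul_sum,
      sumId, Nat.card_Icc]
    have hqr : (a:ℚ) * (q:ℚ) + ((b*t % a : ℕ):ℚ) = ((b*t:ℕ):ℚ) := by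
      have h0 : a * q + b*t % a = b*t := by
        rw [hqdef]
        exact Nat.div_add_mod (b*t) a
      exact_mod_cast h0
    rw [← hqr]
    simp only [nsmul_eq_mul, Nat.add_sub_cancel]
    field_simp
    ring
  rw [Finset.sum_congr rfl hstep]
  -- Step 3: the bijection t ↦ b*t % a
  have himg : ∀ f : ℕ → ℚ, (∑ t ∈ Finset.Ioo 0 a, f (b*t % a)) = ∑ t ∈ Finset.Ioo 0 a, f t := by
    intro f
    conv_rhs => rw [← img a b ha hab]
    rw [Finset.sum_image]
    intro t ht t' ht' h
    simp only [Finset.mem_coe, Finset.mem_Ioo] at ht ht'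
    exact inj_t a b hab ht.2 ht'.2 h
  have hA1 : (∑ t ∈ Finset.Ioo 0 a, (t:ℚ)) = ((a:ℚ)-1)*a/2 := by
    rw [ioo_eq a ha, sumId]
    have h1 : ((a-1:ℕ):ℚ) = (a:ℚ) - 1 := by
      push_cast [Nat.cast_sub ha]; ring
    rw [h1]; ring
  have hA2 : (∑ t ∈ Finset.Ioo 0 a, (t:ℚ)^2) = ((a:ℚ)-1)*a*(2*a-1)/6 := by
    rw [ioo_eq a ha, sumSq]
    have h1 : ((a-1:ℕ):ℚ) = (a:ℚ) - 1 := by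
      push_cast [Nat.cast_sub ha]; ring
    rw [h1]; ring
  have hr1 : (∑ t ∈ Finset.Ioo 0 a, ((b*t % a : ℕ):ℚ)) = ((a:ℚ)-1)*a/2 := by
    rw [himg (fun x => (x:ℚ))]; exact hA1
  have hr2 : (∑ t ∈ Finset.Ioo 0 a, ((b*t % a : ℕ):ℚ)^2) = ((a:ℚ)-1)*a*(2*a-1)/6 := by
    rw [himg (fun x => (x:ℚ)^2)]; exact hA2
  have hbt1 : (∑ t ∈ Finset.Ioo 0 a, ((b*t : ℕ):ℚ)) = (b:ℚ) * (((a:ℚ)-1)*a/2) := by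
    have h1 : ∀ t ∈ Finset.Ioo 0 a, ((b*t : ℕ):ℚ) = (b:ℚ) * (t:ℚ) := by
      intro t _; push_cast; ring
    rw [Finset.sum_congr rfl h1, ← Finset.mul_sum, hA1]
  have hbt2 : (∑ t ∈ Finset.Ioo 0 a, ((b*t : ℕ):ℚ)^2) = (b:ℚ)^2 * (((a:ℚ)-1)*a*(2*a-1)/6) := by
    have h1 : ∀ t ∈ Finset.Ioo 0 a, ((b*t : ℕ):ℚ)^2 = (b:ℚ)^2 * (t:ℚ)^2 := by
      intro t _; push_cast; ring
    rw [Finset.sum_congr rfl h1, ← Finset.mul_sum, hA2]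
  rw [Finset.sum_add_distrib, Finset.sum_sub_distrib, Finset.sum_sub_distrib,
    ← Finset.sum_div, ← Finset.sum_div, ← Finset.sum_div, ← Finset.sum_div,
    hbt1, hbt2, hr1, hr2]
  field_simp
  ring
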